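/- arXiv:2404.03780 — 4 statements merged into one kernel-verified Lean document; each statement's English description precedes it below -/
import Mathlib

section
/- Let f be a C¹ circle diffeomorphism with no periodic points, s < 0, and μ an s-measure for f. Suppose there exists C > 0 and a strictly increasing sequence of integers (q_n) such that (f^{q_n})'(x) ≤ C for all x and all n. Then μ is atomless. -/
open MeasureTheory

/-- an s-measure (s < 0) of a circle diffeomorphism without periodic points,
whose iterates `f^{q_n}` have uniformly bounded derivative along a strictly increasing
sequence of times, is atomless. -/
theorem statement3 (f : Homeomorph (AddCircle (1:ℝ)) (AddCircle (1:ℝ)))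
    (f' : AddCircle (1:ℝ) → ℝ) (hf'pos : ∀ x, 0 < f' x)
    (hnoper : ∀ (x : AddCircle (1:ℝ)) (n : ℕ), 0 < n → (⇑f)^[n] x ≠ x)
    (s : ℝ) (hs : s < 0) (μ : Measure (AddCircle (1:ℝ))) [IsProbabilityMeasure μ]
    (h : ∀ (k : ℕ) (φ : AddCircle (1:ℝ) → ℝ), Measurable φ → (∃ M, ∀ x, |φ x| ≤ M) →
      ∫ x, φ x ∂μ =
        ∫ x, (∏ i ∈ Finset.range k, f' ((⇑f)^[i] ((⇑f.symm)^[k] x))) ^ (-s) *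
          φ ((⇑f.symm)^[k] x) ∂μ)
    (C : ℝ) (hC : 0 < C) (q : ℕ → ℕ) (hq : StrictMono q)
    (hbound : ∀ (x : AddCircle (1:ℝ)) (n : ℕ),
      ∏ i ∈ Finset.range (q n), f' ((⇑f)^[i] x) ≤ C) :
    ∀ p : AddCircle (1:ℝ), μ {p} = 0 := by
  intro p
  by_contra hμp
  have hfin : ∀ x : AddCircle (1:ℝ), μ {x} ≠ ⊤ := fun x => measure_ne_top μ _
  have hli : ∀ k (x : AddCircle (1:ℝ)), (⇑f)^[k] ((⇑f.symm)^[k] x) = x := fun k =>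
    Function.LeftInverse.iterate f.apply_symm_apply k
  have hri : ∀ k (x : AddCircle (1:ℝ)), (⇑f.symm)^[k] ((⇑f)^[k] x) = x := fun k =>
    Function.LeftInverse.iterate f.symm_apply_apply k
  have key : ∀ k : ℕ,
      (μ {p}).toReal =
        (∏ i ∈ Finset.range k, f' ((⇑f)^[i] p)) ^ (-s) * (μ {(⇑f)^[k] p}).toReal := by
    intro k
    set φ : AddCircle (1:ℝ) → ℝ := Set.indicator ({p} : Set (AddCircle (1:ℝ))) (fun _ => (1:ℝ))
      with hφ
    have hmeas : Measurable φ := measurable_const.indicator (measurableSet_singleton p)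
    have hbdd : ∃ M, ∀ x, |φ x| ≤ M := by
      refine ⟨1, fun x => ?_⟩
      by_cases hx : x ∈ ({p} : Set (AddCircle (1:ℝ))) <;> simp only [hφ, Set.indicator_apply, hx] <;> norm_num
    have H := h k φ hmeas hbdd
    set D : ℝ := ∏ i ∈ Finset.range k, f' ((⇑f)^[i] p) with hD
    have hptwise : ∀ x, (∏ i ∈ Finset.range k, f' ((⇑f)^[i] ((⇑f.symm)^[k] x))) ^ (-s) *
          φ ((⇑f.symm)^[k] x)
        = Set.indicator ({(⇑f)^[k] p} : Set (AddCircle (1:ℝ))) (fun _ => D ^ (-s)) x := by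
      intro x
      by_cases hx : (⇑f.symm)^[k] x = p
      · have hx' : x = (⇑f)^[k] p := by rw [← hx, hli]
        simp [hφ, hx, hx', hD, hri]
      · have hx' : x ≠ (⇑f)^[k] p := by
          intro hc; exact hx (by rw [hc, hri])
        simp [hφ, hx, hx']
    calc (μ {p}).toReal = ∫ x, φ x ∂μ := by
          rw [hφ]
          rw [MeasureTheory.integral_indicator_const (1:ℝ) (measurableSet_singleton p)]
          simp
          rfl
      _ = ∫ x, Set.indicator ({(⇑f)^[k] p} : Set (AddCircle (1:ℝ))) (fun _ => D ^ (-s)) x ∂μ := by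
          rw [H]; exact integral_congr_ae (Filter.Eventually.of_forall hptwise)
      _ = D ^ (-s) * (μ {(⇑f)^[k] p}).toReal := by
          rw [MeasureTheory.integral_indicator_const (D ^ (-s)) (measurableSet_singleton _)]
          rw [smul_eq_mul, mul_comm]
          rfl
  have hs' : 0 < -s := by linarith
  have hμppos : 0 < (μ {p}).toReal := ENNReal.toReal_pos hμp (hfin p)
  have hCpow : 0 < C ^ (-s) := Real.rpow_pos_of_pos hC _
  set δ : ℝ := (μ {p}).toReal / C ^ (-s) with hδdef
  have hδpos : 0 < δ := div_pos hμppos hCpow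
  -- each atom on the orbit has measure ≥ δ
  have hlow : ∀ n : ℕ, δ ≤ (μ {(⇑f)^[q n] p}).toReal := by
    intro n
    have hDpos : 0 < ∏ i ∈ Finset.range (q n), f' ((⇑f)^[i] p) :=
      Finset.prod_pos (fun i _ => hf'pos _)
    have hDle : (∏ i ∈ Finset.range (q n), f' ((⇑f)^[i] p)) ^ (-s) ≤ C ^ (-s) :=
      Real.rpow_le_rpow hDpos.le (hbound p n) hs'.le
    have hDpow : 0 < (∏ i ∈ Finset.range (q n), f' ((⇑f)^[i] p)) ^ (-s) :=
      Real.rpow_pos_of_pos hDpos _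
    have hk := key (q n)
    have : (μ {(⇑f)^[q n] p}).toReal
        = (μ {p}).toReal / (∏ i ∈ Finset.range (q n), f' ((⇑f)^[i] p)) ^ (-s) := by
      field_simp [hk]
      rw [hk]; ring
    rw [this, hδdef]
    exact div_le_div_of_nonneg_left hμppos.le hDpow hDle
  -- the orbit points are distinct
  have hinj : Function.Injective (fun n : ℕ => (⇑f)^[q n] p) := by
    have hiterinj : ∀ k : ℕ, Function.Injective ((⇑f)^[k]) := fun k =>
      Function.Injective.iterate f.injective k
    intro m n hmn
    by_contra hne
    rcases Nat.lt_or_ge m n with hlt | hge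
    · have hqlt := hq hlt
      have : (⇑f)^[q m] ((⇑f)^[q n - q m] p) = (⇑f)^[q m] p := by
        rw [← Function.iterate_add_apply, Nat.add_sub_cancel' hqlt.le]
        exact hmn.symm
      exact hnoper p (q n - q m) (Nat.sub_pos_of_lt hqlt) (hiterinj _ this)
    · rcases Nat.lt_or_ge n m with hlt | hge'
      · have hqlt := hq hlt
        have : (⇑f)^[q n] ((⇑f)^[q m - q n] p) = (⇑f)^[q n] p := by
          rw [← Function.iterate_add_apply, Nat.add_sub_cancel' hqlt.le]
          exact hmn
        exact hnoper p (q m - q n) (Nat.sub_pos_of_lt hqlt) (hiterinj _ this)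
      · exact hne (le_antisymm hge' hge)
  -- finite sums of atoms are bounded by 1
  have hsum : ∀ N : ℕ, ∑ n ∈ Finset.range N, (μ {(⇑f)^[q n] p}).toReal ≤ 1 := by
    intro N
    have hdisj : (↑(Finset.range N) : Set ℕ).PairwiseDisjoint
        (fun n => ({(⇑f)^[q n] p} : Set (AddCircle (1:ℝ)))) := by
      intro a _ b _ hab
      simp only [Function.onFun, Set.disjoint_singleton]
      exact fun hc => hab (hinj hc)
    have hmu : μ (⋃ n ∈ Finset.range N, ({(⇑f)^[q n] p} : Set (AddCircle (1:ℝ))))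
        = ∑ n ∈ Finset.range N, μ {(⇑f)^[q n] p} :=
      measure_biUnion_finset hdisj (fun n _ => measurableSet_singleton _)
    have hle : (∑ n ∈ Finset.range N, μ {(⇑f)^[q n] p}) ≤ 1 := by
      rw [← hmu]
      exact (measure_mono (Set.subset_univ _)).trans_eq measure_univ
    have := ENNReal.toReal_mono (by norm_num) hle
    rw [ENNReal.toReal_sum (fun n _ => hfin _)] at this
    simpa using this
  obtain ⟨N, hN⟩ := exists_nat_gt (1 / δ)
  have hNδ : 1 < N * δ := by
    rw [div_lt_iff₀ hδpos] at hN
    linarith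
  have : (N : ℝ) * δ ≤ ∑ n ∈ Finset.range N, (μ {(⇑f)^[q n] p}).toReal := by
    calc (N : ℝ) * δ = ∑ _n ∈ Finset.range N, δ := by
          rw [Finset.sum_const, Finset.card_range, nsmul_eq_mul]
      _ ≤ _ := Finset.sum_le_sum (fun n _ => hlow n)
  linarith [hsum N]
end

section
/- Let c ∈ ℝ, d ≥ 2 an integer, and f(x) = f(c) + ψ(x)·|ψ(x)|^{d-1} on a neighborhood U of c, where ψ is a C¹ diffeomorphism with ψ(c) = 0. Then there exists a constant K > 0 and a neighborhood U' ⊆ U of c such that for every interval I ⊆ U' and every x ∈ I, f'(x) ≤ K · |f(I)| / |I|, where |·| denotes length. -/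
lemma gHasDerivAt (e : ℕ) (he : 1 ≤ e) (y : ℝ) :
    HasDerivAt (fun z : ℝ => z * |z| ^ e) (((e : ℝ) + 1) * |y| ^ e) y := by
  obtain ⟨k, rfl⟩ : ∃ k, e = k + 1 := ⟨e - 1, by omega⟩
  rcases lt_trichotomy y 0 with hy | hy | hy
  · have h1 : HasDerivAt (fun z : ℝ => z * (-z) ^ (k + 1))
        (1 * (-y) ^ (k + 1) + y * ((↑(k + 1) : ℝ) * (-y) ^ k * (-1))) y :=
      (hasDerivAt_id y).mul (((hasDerivAt_id y).neg).pow (k + 1))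
    have heq : (fun z : ℝ => z * |z| ^ (k + 1)) =ᶠ[nhds y] (fun z : ℝ => z * (-z) ^ (k + 1)) := by
      filter_upwards [eventually_lt_nhds hy] with z hz
      rw [abs_of_neg hz]
    have h2 := h1.congr_of_eventuallyEq heq
    refine h2.congr_deriv ?_
    rw [abs_of_neg hy]
    push_cast
    ring
  · subst hy
    rw [hasDerivAt_iff_tendsto_slope]
    have hcong : (fun z : ℝ => |z| ^ (k + 1)) =ᶠ[nhdsWithin (0:ℝ) {(0:ℝ)}ᶜ]
        slope (fun z : ℝ => z * |z| ^ (k + 1)) 0 := by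
      filter_upwards [self_mem_nhdsWithin] with z hz
      have hz' : z ≠ 0 := hz
      rw [slope_def_field, zero_mul, sub_zero, sub_zero, mul_div_cancel_left₀ _ hz']
    have hlim : Filter.Tendsto (fun z : ℝ => |z| ^ (k + 1)) (nhdsWithin (0:ℝ) {(0:ℝ)}ᶜ)
        (nhds ((((k:ℝ) + 1) + 1) * |(0:ℝ)| ^ (k + 1))) := by
      have : Filter.Tendsto (fun z : ℝ => |z| ^ (k + 1)) (nhds (0:ℝ)) (nhds (|(0:ℝ)| ^ (k + 1))) :=
        ((continuous_abs.pow (k + 1)).tendsto 0)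
      simp only [abs_zero, zero_pow (Nat.succ_ne_zero k), mul_zero]
      simpa using this.mono_left nhdsWithin_le_nhds
    exact Filter.Tendsto.congr' hcong (by convert hlim using 2; push_cast; ring)
  · have h1 : HasDerivAt (fun z : ℝ => z * z ^ (k + 1))
        (1 * y ^ (k + 1) + y * ((↑(k + 1) : ℝ) * y ^ k * 1)) y :=
      (hasDerivAt_id y).mul ((hasDerivAt_id y).pow (k + 1))
    have heq : (fun z : ℝ => z * |z| ^ (k + 1)) =ᶠ[nhds y] (fun z : ℝ => z * z ^ (k + 1)) := by
      filter_upwards [eventually_gt_nhds hy] with z hz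
      rw [abs_of_pos hz]
    have h2 := h1.congr_of_eventuallyEq heq
    refine h2.congr_deriv ?_
    rw [abs_of_pos hy]
    push_cast
    ring

lemma keyIneq (e : ℕ) (u v : ℝ) (huv : u ≤ v) :
    (v - u) * (max |u| |v|) ^ e / 2 ≤ v * |v| ^ e - u * |u| ^ e := by
  have key : ∀ p q : ℝ, 0 ≤ p → p ≤ q → (q - p) * q ^ e ≤ q * q ^ e - p * p ^ e := by
    intro p q hp hpq
    have h1 : p ^ e ≤ q ^ e := pow_le_pow_left₀ hp hpq e
    nlinarith [mul_nonneg hp (sub_nonneg.2 h1)]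
  rcases le_or_gt 0 u with hu | hu
  · have hv : 0 ≤ v := hu.trans huv
    rw [abs_of_nonneg hu, abs_of_nonneg hv, max_eq_right huv]
    have := key u v hu huv
    nlinarith [mul_nonneg (sub_nonneg.2 huv) (pow_nonneg hv e)]
  · rcases le_or_gt v 0 with hv | hv
    · rw [abs_of_neg hu, abs_of_nonpos hv, max_eq_left (by linarith : -v ≤ -u)]
      have := key (-v) (-u) (by linarith) (by linarith)
      nlinarith [mul_nonneg (sub_nonneg.2 huv) (pow_nonneg (by linarith : (0:ℝ) ≤ -u) e)]
    · rw [abs_of_neg hu, abs_of_pos hv]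
      have hA : (0:ℝ) < -u := by linarith
      rcases max_cases (-u) v with ⟨hmax, hle⟩ | ⟨hmax, hle⟩ <;> rw [hmax] <;>
        nlinarith [pow_nonneg hA.le e, pow_nonneg hv.le e,
          mul_nonneg hv.le (pow_nonneg hv.le e), mul_nonneg hA.le (pow_nonneg hA.le e)]

/-- local derivative estimate at a non-flat critical point:
if `f(x) = f(c) + ψ(x)·|ψ(x)|^(d-1)` near `c` with `ψ` a C¹ diffeomorphism vanishing
at `c`, then there are `K > 0` and a smaller neighborhood `U'` of `c` on which
`|f'(x)| ≤ K · |f(I)| / |I|` for every interval `I ⊆ U'` and `x ∈ I`. -/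
theorem statement5 (c : ℝ) (d : ℕ) (hd : 2 ≤ d) (U : Set ℝ) (hU : U ∈ nhds c)
    (f ψ ψ' : ℝ → ℝ) (hψc : ψ c = 0)
    (hψ : ∀ x ∈ U, HasDerivAt ψ (ψ' x) x)
    (hψ'cont : ContinuousOn ψ' U) (hψ'ne : ∀ x ∈ U, ψ' x ≠ 0)
    (hf : ∀ x ∈ U, f x = f c + ψ x * |ψ x| ^ (d - 1)) :
    ∃ K > (0:ℝ), ∃ U' ∈ nhds c, U' ⊆ U ∧
      ∀ a b : ℝ, a < b → Set.Icc a b ⊆ U' →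
        ∀ x ∈ Set.Icc a b, |deriv f x| ≤ K * |f b - f a| / (b - a) := by
  set e := d - 1 with he_def
  have he : 1 ≤ e := by omega
  -- choose a compact interval J ⊆ U around c
  obtain ⟨ε, hε, hball⟩ := Metric.mem_nhds_iff.1 hU
  set δ := ε / 2 with hδ_def
  have hδ : 0 < δ := by positivity
  set J : Set ℝ := Set.Icc (c - δ) (c + δ) with hJ_def
  have hJU : J ⊆ U := by
    intro x hx
    apply hball
    rw [Metric.mem_ball, Real.dist_eq]
    rw [hJ_def, Set.mem_Icc] at hx
    rw [abs_sub_lt_iff]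
    constructor <;> [skip; skip] <;> simp only [hδ_def] at hx ⊢ <;> linarith [hx.1, hx.2]
  have hcJ : c ∈ J := by
    rw [hJ_def]; constructor <;> simp <;> linarith
  have hJcomp : IsCompact J := isCompact_Icc
  have hJne : J.Nonempty := ⟨c, hcJ⟩
  have hcontabs : ContinuousOn (fun x => |ψ' x|) J := ((hψ'cont.mono hJU)).abs
  obtain ⟨x0, hx0J, hx0'⟩ := hJcomp.exists_isMinOn hJne hcontabs
  obtain ⟨x1, hx1J, hx1'⟩ := hJcomp.exists_isMaxOn hJne hcontabs
  have hx0 : ∀ y ∈ J, |ψ' x0| ≤ |ψ' y| := fun y hy => hx0' hy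
  have hx1 : ∀ y ∈ J, |ψ' y| ≤ |ψ' x1| := fun y hy => hx1' hy
  set m := |ψ' x0| with hm_def
  set M := |ψ' x1| with hM_def
  have hm : 0 < m := abs_pos.2 (hψ'ne x0 (hJU hx0J))
  have hM : 0 < M := lt_of_lt_of_le hm (hx1 x0 hx0J)
  -- sign dichotomy for ψ'
  have hsign : (∀ x ∈ J, 0 < ψ' x) ∨ (∀ x ∈ J, ψ' x < 0) := by
    by_contra h
    push_neg at h
    obtain ⟨⟨y1, hy1, h1⟩, ⟨y2, hy2, h2⟩⟩ := h
    have hsub : Set.uIcc y1 y2 ⊆ J := Set.uIcc_subset_Icc hy1 hy2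
    have h0 : (0:ℝ) ∈ Set.uIcc (ψ' y1) (ψ' y2) := Set.mem_uIcc.2 (Or.inl ⟨h1, h2⟩)
    obtain ⟨z, hz, hz0⟩ := intermediate_value_uIcc ((hψ'cont.mono hJU).mono hsub) h0
    exact hψ'ne z (hJU (hsub hz)) hz0
  have hψcont : ContinuousOn ψ J := fun x hx => ((hψ x (hJU hx)).continuousAt).continuousWithinAt
  have hderivψ : ∀ x ∈ J, deriv ψ x = ψ' x := fun x hx => (hψ x (hJU hx)).deriv
  -- monotonicity or antitonicity of ψ on J
  have hmono : MonotoneOn ψ J ∨ AntitoneOn ψ J := by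
    rcases hsign with hs | hs
    · left
      exact (strictMonoOn_of_deriv_pos (convex_Icc _ _) hψcont fun x hx =>
        (hderivψ x (interior_subset hx)) ▸ hs x (interior_subset hx)).monotoneOn
    · right
      exact (strictAntiOn_of_deriv_neg (convex_Icc _ _) hψcont fun x hx =>
        (hderivψ x (interior_subset hx)) ▸ hs x (interior_subset hx)).antitoneOn
  refine ⟨2 * ((e : ℝ) + 1) * M / m, by positivity, Set.Ioo (c - δ) (c + δ),
    Ioo_mem_nhds (by linarith) (by linarith), ?_, ?_⟩
  · exact fun x hx => hJU (Set.Ioo_subset_Icc_self hx)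
  intro a b hab hIsub x hx
  have hIJ : Set.Icc a b ⊆ J := fun y hy => Set.Ioo_subset_Icc_self (hIsub hy)
  have haJ : a ∈ J := hIJ ⟨le_refl a, hab.le⟩
  have hbJ : b ∈ J := hIJ ⟨hab.le, le_refl b⟩
  have hxJ : x ∈ J := hIJ hx
  have haU : a ∈ U := hJU haJ
  have hbU : b ∈ U := hJU hbJ
  -- derivative of f at x
  have hfd : HasDerivAt f ((((e:ℝ) + 1) * |ψ x| ^ e) * ψ' x) x := by
    have h1 : HasDerivAt (fun y => f c + ψ y * |ψ y| ^ e) ((((e:ℝ) + 1) * |ψ x| ^ e) * ψ' x) x :=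
      (((gHasDerivAt e he (ψ x)).comp x (hψ x (hJU hxJ)))).const_add (f c)
    apply h1.congr_of_eventuallyEq
    filter_upwards [mem_nhds_iff.2 ⟨Set.Ioo (c - δ) (c + δ),
      fun y hy => hJU (Set.Ioo_subset_Icc_self hy), isOpen_Ioo, hIsub hx⟩] with y hy
    rw [hf y hy, he_def]
  have hderf : deriv f x = (((e:ℝ) + 1) * |ψ x| ^ e) * ψ' x := hfd.deriv
  -- MVT for ψ on [a, b]
  obtain ⟨ξ, hξ, hξ'⟩ := exists_hasDerivAt_eq_slope ψ ψ' hab (hψcont.mono hIJ)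
    (fun y hy => hψ y (hJU (hIJ (Set.Ioo_subset_Icc_self hy))))
  have hξJ : ξ ∈ J := hIJ (Set.Ioo_subset_Icc_self hξ)
  have hslope : |ψ b - ψ a| = |ψ' ξ| * (b - a) := by
    rw [hξ', abs_div, abs_of_pos (by linarith : (0:ℝ) < b - a), div_mul_cancel₀]
    linarith
  have hslope' : m * (b - a) ≤ |ψ b - ψ a| := by
    rw [hslope]
    exact mul_le_mul_of_nonneg_right (hx0 ξ hξJ) (by linarith)
  set M0 := max |ψ a| |ψ b| with hM0_def
  have hM0nn : 0 ≤ M0 := le_trans (abs_nonneg _) (le_max_left _ _)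
  -- ψ x between ψ a and ψ b
  have hbetween : |ψ x| ≤ M0 := by
    rcases hmono with hmo | hmo
    · exact abs_le_max_abs_abs (hmo haJ hxJ hx.1) (hmo hxJ hbJ hx.2)
    · rw [hM0_def, max_comm]
      exact abs_le_max_abs_abs (hmo hxJ hbJ hx.2) (hmo haJ hxJ hx.1)
  -- key lower bound on |f b - f a|
  have hkey : |ψ b - ψ a| * M0 ^ e / 2 ≤ |f b - f a| := by
    have hfba : f b - f a = ψ b * |ψ b| ^ e - ψ a * |ψ a| ^ e := by
      rw [hf a haU, hf b hbU, he_def]; ring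
    rcases le_total (ψ a) (ψ b) with hcase | hcase
    · have hk := keyIneq e (ψ a) (ψ b) hcase
      have hnn : (0:ℝ) ≤ ψ b * |ψ b| ^ e - ψ a * |ψ a| ^ e := by
        refine le_trans ?_ hk
        have h1 : (0:ℝ) ≤ ψ b - ψ a := sub_nonneg.2 hcase
        have h2 : (0:ℝ) ≤ (max |ψ a| |ψ b|) ^ e :=
          pow_nonneg (le_trans (abs_nonneg _) (le_max_left _ _)) e
        positivity
      have habs : |f b - f a| = ψ b * |ψ b| ^ e - ψ a * |ψ a| ^ e := by
        rw [hfba]; exact abs_of_nonneg hnn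
      rw [habs, abs_of_nonneg (sub_nonneg.2 hcase)]
      exact hk
    · have hk := keyIneq e (ψ b) (ψ a) hcase
      have hnn : (0:ℝ) ≤ ψ a * |ψ a| ^ e - ψ b * |ψ b| ^ e := by
        refine le_trans ?_ hk
        have h1 : (0:ℝ) ≤ ψ a - ψ b := sub_nonneg.2 hcase
        have h2 : (0:ℝ) ≤ (max |ψ b| |ψ a|) ^ e :=
          pow_nonneg (le_trans (abs_nonneg _) (le_max_left _ _)) e
        positivity
      have habs : |f b - f a| = ψ a * |ψ a| ^ e - ψ b * |ψ b| ^ e := by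
        rw [hfba, abs_sub_comm]; exact abs_of_nonneg hnn
      rw [habs, abs_sub_comm, abs_of_nonneg (sub_nonneg.2 hcase), hM0_def, max_comm]
      exact hk
  -- combine
  have hfba_lb : m * (b - a) * M0 ^ e / 2 ≤ |f b - f a| := by
    refine le_trans ?_ hkey
    have := mul_le_mul_of_nonneg_right hslope' (pow_nonneg hM0nn e)
    linarith
  have hderbd : |deriv f x| ≤ ((e:ℝ) + 1) * M0 ^ e * M := by
    rw [hderf, abs_mul, abs_mul]
    have h1 : |((e:ℝ) + 1)| = (e:ℝ) + 1 := abs_of_pos (by positivity)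
    have h2 : |(|ψ x| ^ e)| = |ψ x| ^ e := abs_of_nonneg (pow_nonneg (abs_nonneg _) e)
    rw [h1, h2]
    have h3 : |ψ x| ^ e ≤ M0 ^ e := pow_le_pow_left₀ (abs_nonneg _) hbetween e
    have h4 : |ψ' x| ≤ M := hx1 x hxJ
    have := mul_le_mul (mul_le_mul_of_nonneg_left h3 (by positivity : (0:ℝ) ≤ (e:ℝ)+1)) h4
      (abs_nonneg _) (by positivity)
    linarith
  refine le_trans hderbd ?_
  rw [le_div_iff₀ (by linarith : (0:ℝ) < b - a)]
  calc ((e:ℝ) + 1) * M0 ^ e * M * (b - a)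
      = (2 * ((e:ℝ) + 1) * M / m) * (m * (b - a) * M0 ^ e / 2) := by field_simp
    _ ≤ (2 * ((e:ℝ) + 1) * M / m) * |f b - f a| :=
        mul_le_mul_of_nonneg_left hfba_lb (by positivity)
end

section
/- Fix a circle homeomorphism f and s < 0. If every s-measure for f is ergodic with respect to f, and at least one s-measure exists, then the s-measure is unique. -/
open MeasureTheory
open scoped ENNReal

set_option maxHeartbeats 2000000 in
/-- if every s-measure (s < 0) of a circle homeomorphism is ergodic and
at least one s-measure exists, then the s-measure is unique. -/
theorem statement8 (f : Homeomorph (AddCircle (1:ℝ)) (AddCircle (1:ℝ)))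
    (f' : AddCircle (1:ℝ) → ℝ) (s : ℝ) (hs : s < 0)
    (IsS : Measure (AddCircle (1:ℝ)) → Prop)
    (hIsS : ∀ μ, IsS μ ↔ (IsProbabilityMeasure μ ∧
      ∀ φ : AddCircle (1:ℝ) → ℝ, Measurable φ → (∃ M, ∀ x, |φ x| ≤ M) →
        ∫ x, φ x ∂μ = ∫ x, (f' (f.symm x)) ^ (-s) * φ (f.symm x) ∂μ))
    (herg : ∀ μ, IsS μ → ∀ B : Set (AddCircle (1:ℝ)), MeasurableSet B →
      ⇑f ⁻¹' B = B → μ B = 0 ∨ μ B = 1)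
    (hex : ∃ μ, IsS μ) :
    ∀ μ ν, IsS μ → IsS ν → μ = ν := by
  classical
  intro μ ν hμIsS hνIsS
  obtain ⟨hμP, hμT⟩ := (hIsS μ).mp hμIsS
  obtain ⟨hνP, hνT⟩ := (hIsS ν).mp hνIsS
  haveI := hμP
  haveI := hνP
  set w : AddCircle (1:ℝ) → ℝ := fun x => (f' (f.symm x)) ^ (-s) with hw
  -- bounded measurable functions are integrable
  have hbd_int : ∀ (m : Measure (AddCircle (1:ℝ))) [IsFiniteMeasure m]
      (φ : AddCircle (1:ℝ) → ℝ), Measurable φ → (∃ M, ∀ x, |φ x| ≤ M) →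
      Integrable φ m := by
    intro m _ φ hφm ⟨M, hM⟩
    refine ⟨hφm.aestronglyMeasurable, ?_⟩
    exact HasFiniteIntegral.of_bounded (C := M) (Filter.Eventually.of_forall
      fun x => by simpa [Real.norm_eq_abs] using hM x)
  -- w is integrable w.r.t. any s-measure
  have hwint : ∀ (m : Measure (AddCircle (1:ℝ))), IsProbabilityMeasure m →
      (∀ φ : AddCircle (1:ℝ) → ℝ, Measurable φ → (∃ M, ∀ x, |φ x| ≤ M) →
        ∫ x, φ x ∂m = ∫ x, w x * φ (f.symm x) ∂m) → Integrable w m := by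
    intro m hP hT
    by_contra hni
    have h1 := hT (fun _ => 1) measurable_const ⟨1, fun x => by norm_num⟩
    simp only [mul_one] at h1
    rw [integral_undef hni, integral_const, measureReal_def, hP.measure_univ] at h1
    norm_num at h1
  have hwμ : Integrable w μ := hwint μ hμP hμT
  have hwν : Integrable w ν := hwint ν hνP hνT
  -- the sum measure
  set σ : Measure (AddCircle (1:ℝ)) := μ + ν with hσ
  haveI : IsFiniteMeasure σ := inferInstanceAs (IsFiniteMeasure (μ + ν))
  haveI : μ.HaveLebesgueDecomposition σ := Measure.haveLebesgueDecomposition_of_finiteMeasure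
  haveI : ν.HaveLebesgueDecomposition σ := Measure.haveLebesgueDecomposition_of_finiteMeasure
  have hσuniv : σ Set.univ = 2 := by
    simp [hσ, Measure.add_apply, measure_univ, one_add_one_eq_two]
  -- transfer equation for σ
  have hσT : ∀ φ : AddCircle (1:ℝ) → ℝ, Measurable φ → (∃ M, ∀ x, |φ x| ≤ M) →
      ∫ x, φ x ∂σ = ∫ x, w x * φ (f.symm x) ∂σ := by
    intro φ hφm hφb
    have hφμ : Integrable φ μ := hbd_int μ φ hφm hφb
    have hφν : Integrable φ ν := hbd_int ν φ hφm hφb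
    obtain ⟨M, hM⟩ := id hφb
    have hψ : ∀ (m : Measure (AddCircle (1:ℝ))), Integrable w m →
        Integrable (fun x => w x * φ (f.symm x)) m := by
      intro m hwm
      have := hwm.bdd_mul (c := M) ((hφm.comp f.symm.measurable).aestronglyMeasurable)
        (Filter.Eventually.of_forall fun x => by simpa [Real.norm_eq_abs] using hM (f.symm x))
      exact this.congr (Filter.Eventually.of_forall fun x => mul_comm _ _)
    rw [hσ, integral_add_measure hφμ hφν, integral_add_measure (hψ μ hwμ) (hψ ν hwν),
      hμT φ hφm hφb, hνT φ hφm hφb]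
  -- quasi-invariance of σ
  have hqi : ∀ N : Set (AddCircle (1:ℝ)), MeasurableSet N → σ N = 0 →
      σ (⇑f ⁻¹' N) = 0 := by
    intro N hN h0
    have hmeas : MeasurableSet (⇑f ⁻¹' N) := hN.preimage f.measurable
    have hbnd : ∀ x, |(⇑f ⁻¹' N).indicator (fun _ => (1:ℝ)) x| ≤ 1 := by
      intro x
      by_cases hx : x ∈ ⇑f ⁻¹' N <;> simp [Set.indicator_apply, hx]
    have hT := hσT ((⇑f ⁻¹' N).indicator (fun _ => (1:ℝ)))
      (measurable_const.indicator hmeas) ⟨1, hbnd⟩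
    have hae : (fun x => w x * (⇑f ⁻¹' N).indicator (fun _ => (1:ℝ)) (f.symm x))
        =ᵐ[σ] 0 := by
      have hnm : ∀ᵐ x ∂σ, x ∉ N := (measure_eq_zero_iff_ae_notMem).mp h0
      filter_upwards [hnm] with x hx
      have : f.symm x ∉ ⇑f ⁻¹' N := by
        simp only [Set.mem_preimage, Homeomorph.apply_symm_apply]
        exact hx
      simp [Set.indicator_apply, this]
    rw [integral_congr_ae hae, integral_indicator_const _ hmeas,
      smul_eq_mul, mul_one] at hT
    simp only [Pi.zero_apply, integral_zero] at hT
    have hfin : σ (⇑f ⁻¹' N) ≠ ⊤ := measure_ne_top σ _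
    exact ((ENNReal.toReal_eq_zero_iff _).mp hT).resolve_right hfin
  -- density of μ w.r.t. σ
  have hμσ : μ ≪ σ := Measure.absolutelyContinuous_of_le (Measure.le_add_right le_rfl)
  have hgmeas : Measurable (μ.rnDeriv σ) := Measure.measurable_rnDeriv μ σ
  have hg_le_one : ∀ᵐ x ∂σ, μ.rnDeriv σ x ≤ 1 := by
    have h1 := Measure.rnDeriv_add μ ν σ
    have h2 := Measure.rnDeriv_self σ
    rw [← hσ] at h1
    filter_upwards [h1, h2] with x hx1 hx2
    calc μ.rnDeriv σ x ≤ μ.rnDeriv σ x + ν.rnDeriv σ x := le_self_add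
      _ = σ.rnDeriv σ x := by rw [hx1]; rfl
      _ = 1 := hx2
  have hg_lt_top : ∀ᵐ x ∂σ, μ.rnDeriv σ x < ⊤ := Measure.rnDeriv_lt_top μ σ
  set h : AddCircle (1:ℝ) → ℝ := fun x => min ((μ.rnDeriv σ x).toReal) 1 with hhdef
  have hhmeas : Measurable h := (hgmeas.ennreal_toReal).min measurable_const
  have hh0 : ∀ x, 0 ≤ h x := fun x => le_min ENNReal.toReal_nonneg zero_le_one
  have hh1 : ∀ x, h x ≤ 1 := fun x => min_le_right _ _
  have hhbd : ∃ M, ∀ x, |h x| ≤ M := ⟨1, fun x => by rw [abs_of_nonneg (hh0 x)]; exact hh1 x⟩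
  have hh_eq : h =ᵐ[σ] fun x => (μ.rnDeriv σ x).toReal := by
    filter_upwards [hg_le_one] with x hx
    have : (μ.rnDeriv σ x).toReal ≤ 1 := by
      calc (μ.rnDeriv σ x).toReal ≤ (1 : ℝ≥0∞).toReal :=
        ENNReal.toReal_mono ENNReal.one_ne_top hx
      _ = 1 := by simp
    simp [hhdef, min_eq_left this]
  -- set integrals of h give μ
  have hE1 : ∀ A : Set (AddCircle (1:ℝ)), MeasurableSet A →
      ∫ x in A, h x ∂σ = (μ A).toReal := by
    intro A hA
    rw [setIntegral_congr_ae hA (hh_eq.mono fun x hx _ => hx)]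
    exact Measure.setIntegral_toReal_rnDeriv hμσ A
  -- h ∘ f = h a.e.
  have hfinv : (fun x => h (f x)) =ᵐ[σ] h := by
    have hint1 : Integrable (fun x => h (f x)) σ :=
      hbd_int σ _ (hhmeas.comp f.measurable)
        ⟨1, fun x => by rw [abs_of_nonneg (hh0 _)]; exact hh1 _⟩
    have hint2 : Integrable h σ := hbd_int σ h hhmeas hhbd
    refine Integrable.ae_eq_of_forall_setIntegral_eq _ _ hint1 hint2 ?_
    intro A hA _
    set B : Set (AddCircle (1:ℝ)) := ⇑f.symm ⁻¹' A with hB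
    have hBmeas : MeasurableSet B := hA.preimage f.symm.measurable
    -- E2 : (μ A).toReal = ∫ x in B, w x ∂μ
    have hbnd : ∀ x, |A.indicator (fun _ => (1:ℝ)) x| ≤ 1 := by
      intro x; by_cases hx : x ∈ A <;> simp [Set.indicator_apply, hx]
    have hE2 := hμT (A.indicator (fun _ => (1:ℝ)))
      (measurable_const.indicator hA) ⟨1, hbnd⟩
    rw [integral_indicator_const _ hA, smul_eq_mul, mul_one] at hE2
    have hE2' : (fun x => w x * A.indicator (fun _ => (1:ℝ)) (f.symm x))
        = B.indicator w := by
      funext x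
      by_cases hx : x ∈ B
      · have : f.symm x ∈ A := hx
        simp [Set.indicator_apply, hx, this]
      · have : f.symm x ∉ A := hx
        simp [Set.indicator_apply, hx, this]
    rw [hE2', integral_indicator hBmeas] at hE2
    -- E3 : transfer on the test function 1_A · (h ∘ f)
    have hχm : Measurable (fun x => A.indicator (fun _ => (1:ℝ)) x * h (f x)) :=
      (measurable_const.indicator hA).mul (hhmeas.comp f.measurable)
    have hχb : ∃ M, ∀ x, |A.indicator (fun _ => (1:ℝ)) x * h (f x)| ≤ M := by
      refine ⟨1, fun x => ?_⟩
      rw [abs_mul, abs_of_nonneg (hh0 _)]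
      have h1 := hbnd x
      have h2 := abs_nonneg (A.indicator (fun _ => (1:ℝ)) x)
      have h3 := hh0 (f x)
      have h4 := hh1 (f x)
      nlinarith
    have hE3 := hσT _ hχm hχb
    have hL : (fun x => A.indicator (fun _ => (1:ℝ)) x * h (f x))
        = A.indicator (fun x => h (f x)) := by
      funext x; by_cases hx : x ∈ A <;> simp [Set.indicator_apply, hx]
    have hR : (fun x => w x * (A.indicator (fun _ => (1:ℝ)) (f.symm x) * h (f (f.symm x))))
        = fun x => h x • B.indicator w x := by
      funext x
      rw [Homeomorph.apply_symm_apply]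
      by_cases hx : x ∈ B
      · have : f.symm x ∈ A := hx
        simp [Set.indicator_apply, hx, this, smul_eq_mul]; ring
      · have : f.symm x ∉ A := hx
        simp [Set.indicator_apply, hx, this]
    rw [hL, hR] at hE3
    -- replace h by rnDeriv and use integral_rnDeriv_smul
    have hE4 : ∫ x, h x • B.indicator w x ∂σ = ∫ x in B, w x ∂μ := by
      have : ∫ x, h x • B.indicator w x ∂σ
          = ∫ x, (μ.rnDeriv σ x).toReal • B.indicator w x ∂σ := by
        refine integral_congr_ae ?_
        filter_upwards [hh_eq] with x hx
        rw [hx]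
      rw [this, integral_rnDeriv_smul hμσ, integral_indicator hBmeas]
    calc ∫ x in A, h (f x) ∂σ
        = ∫ x, A.indicator (fun y => h (f y)) x ∂σ := (integral_indicator hA).symm
      _ = ∫ x, h x • B.indicator w x ∂σ := hE3
      _ = ∫ x in B, w x ∂μ := hE4
      _ = (μ A).toReal := hE2.symm
      _ = ∫ x in A, h x ∂σ := (hE1 A hA).symm
  -- h ∘ f^[n] = h a.e.
  have hiter : ∀ n : ℕ, (fun x => h (f^[n] x)) =ᵐ[σ] h := by
    intro n
    induction n with
    | zero => simp
    | succ n ih =>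
      have hNmeas : MeasurableSet {x | ¬ h (f^[n] x) = h x} :=
        (measurableSet_eq_fun (hhmeas.comp (f.measurable.iterate n)) hhmeas).compl
      have hN0 : σ {x | ¬ h (f^[n] x) = h x} = 0 := ae_iff.mp ih
      have hpull := hqi _ hNmeas hN0
      filter_upwards [(measure_eq_zero_iff_ae_notMem).mp hpull, hfinv] with x hx1 hx2
      have hx1' : h (f^[n] (f x)) = h (f x) := by
        by_contra hc
        exact hx1 hc
      rw [Function.iterate_succ_apply, hx1', hx2]
  -- exactly invariant version via limsup
  set u : AddCircle (1:ℝ) → ℝ≥0∞ := fun x => ENNReal.ofReal (h x) with hu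
  have humeas : Measurable u := ENNReal.measurable_ofReal.comp hhmeas
  set H : AddCircle (1:ℝ) → ℝ≥0∞ :=
    fun x => Filter.limsup (fun n => u (f^[n] x)) Filter.atTop with hH
  have hHmeas : Measurable H :=
    Measurable.limsup (fun n => humeas.comp (f.measurable.iterate n))
  have hHinv : ∀ x, H (f x) = H x := by
    intro x
    have h1 : (fun n => u (f^[n] (f x))) = fun n => u (f^[n + 1] x) := by
      funext n
      rw [← Function.iterate_succ_apply]
    show Filter.limsup (fun n => u (f^[n] (f x))) Filter.atTop = _
    rw [h1]
    exact Filter.limsup_nat_add (fun n => u (f^[n] x)) 1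
  have hHu : H =ᵐ[σ] u := by
    have hall : ∀ᵐ x ∂σ, ∀ n : ℕ, h (f^[n] x) = h x := ae_all_iff.mpr hiter
    filter_upwards [hall] with x hx
    have : (fun n => u (f^[n] x)) = fun _ => u x := by
      funext n; simp only [hu]; rw [hx n]
    show Filter.limsup (fun n => u (f^[n] x)) Filter.atTop = u x
    rw [this, Filter.limsup_const]
  -- the half measure is an s-measure, hence ergodic
  set ρ : Measure (AddCircle (1:ℝ)) := (2⁻¹ : ℝ≥0∞) • σ with hρ
  have hρP : IsProbabilityMeasure ρ := by
    constructor
    rw [hρ, Measure.smul_apply, hσuniv, smul_eq_mul]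
    simp [ENNReal.inv_mul_cancel]
  have hρS : IsS ρ := by
    rw [hIsS]
    refine ⟨hρP, ?_⟩
    intro φ hφm hφb
    rw [hρ, integral_smul_measure, integral_smul_measure, hσT φ hφm hφb]
  have key : ∀ B : Set (AddCircle (1:ℝ)), MeasurableSet B → ⇑f ⁻¹' B = B →
      σ B = 0 ∨ σ Bᶜ = 0 := by
    intro B hB hinv
    rcases herg ρ hρS B hB hinv with h0 | h1
    · left
      rw [hρ, Measure.smul_apply, smul_eq_mul] at h0
      rcases mul_eq_zero.mp h0 with hc | hc
      · exact absurd hc (ENNReal.inv_ne_zero.mpr ENNReal.ofNat_ne_top)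
      · exact hc
    · right
      rw [hρ, Measure.smul_apply, smul_eq_mul] at h1
      have hσB : σ B = 2 := by
        have h2 : (2:ℝ≥0∞) * (2⁻¹ * σ B) = 2 * 1 := by rw [h1]
        rwa [← mul_assoc, ENNReal.mul_inv_cancel two_ne_zero ENNReal.ofNat_ne_top,
          one_mul, mul_one] at h2
      rw [measure_compl hB (measure_ne_top σ B), hσuniv, hσB, tsub_self]
  -- integral of h over everything is 1
  have hinth : ∫ x, h x ∂σ = 1 := by
    have := hE1 Set.univ MeasurableSet.univ
    rw [setIntegral_univ, measure_univ] at this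
    simpa using this
  have hσtoReal : (σ Set.univ).toReal = 2 := by rw [hσuniv]; simp
  have hinth_int : Integrable h σ := hbd_int σ h hhmeas hhbd
  -- helper: if h is a.e. strictly on one side of 1/2, contradiction
  haveI : NeZero σ := ⟨by intro hc; rw [hc] at hσuniv; simp at hσuniv⟩
  have hσne : σ ≠ 0 := NeZero.ne σ
  haveI : (ae σ).NeBot := ae_neBot.mpr hσne
  have hno_gt : ¬ (∀ᵐ x ∂σ, (1:ℝ)/2 < h x) := by
    intro hgt
    have hq : Integrable (fun x => h x - 1/2) σ := hinth_int.sub (integrable_const _)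
    have hq0 : ∫ x, (h x - 1/2) ∂σ = 0 := by
      rw [integral_sub hinth_int (integrable_const _), hinth, integral_const,
        measureReal_def, hσtoReal, smul_eq_mul]
      norm_num
    have hqpos : 0 ≤ᵐ[σ] fun x => h x - 1/2 := by
      filter_upwards [hgt] with x hx
      simp only [Pi.zero_apply]
      linarith
    have := (integral_eq_zero_iff_of_nonneg_ae hqpos hq).mp hq0
    obtain ⟨x, hx1, hx2⟩ := (this.and hgt).exists
    simp only [Pi.zero_apply] at hx1
    linarith
  have hno_lt : ¬ (∀ᵐ x ∂σ, h x < (1:ℝ)/2) := by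
    intro hlt
    have hq : Integrable (fun x => 1/2 - h x) σ := (integrable_const _).sub hinth_int
    have hq0 : ∫ x, ((1:ℝ)/2 - h x) ∂σ = 0 := by
      rw [integral_sub (integrable_const _) hinth_int, hinth, integral_const,
        measureReal_def, hσtoReal, smul_eq_mul]
      norm_num
    have hqpos : 0 ≤ᵐ[σ] fun x => (1:ℝ)/2 - h x := by
      filter_upwards [hlt] with x hx
      simp only [Pi.zero_apply]
      linarith
    have := (integral_eq_zero_iff_of_nonneg_ae hqpos hq).mp hq0
    obtain ⟨x, hx1, hx2⟩ := (this.and hlt).exists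
    simp only [Pi.zero_apply] at hx1
    linarith
  -- apply ergodicity to the level sets of H
  have hB1 : σ {x | ENNReal.ofReal ((1:ℝ)/2) < H x} = 0 := by
    have hmeas : MeasurableSet {x | ENNReal.ofReal ((1:ℝ)/2) < H x} :=
      hHmeas measurableSet_Ioi
    have hinv : ⇑f ⁻¹' {x | ENNReal.ofReal ((1:ℝ)/2) < H x}
        = {x | ENNReal.ofReal ((1:ℝ)/2) < H x} := by
      ext x
      simp only [Set.mem_preimage, Set.mem_setOf_eq, hHinv]
    rcases key _ hmeas hinv with h0 | h1
    · exact h0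
    · exfalso
      apply hno_gt
      have hmem : ∀ᵐ x ∂σ, x ∈ {x | ENNReal.ofReal ((1:ℝ)/2) < H x} := by
        rw [← mem_ae_iff] at h1
        exact h1
      filter_upwards [hmem, hHu] with x hx hx2
      have : ENNReal.ofReal ((1:ℝ)/2) < u x := by rw [← hx2]; exact hx
      rw [hu] at this
      exact (ENNReal.ofReal_lt_ofReal_iff_of_nonneg (by norm_num)).mp this
  have hB2 : σ {x | H x < ENNReal.ofReal ((1:ℝ)/2)} = 0 := by
    have hmeas : MeasurableSet {x | H x < ENNReal.ofReal ((1:ℝ)/2)} :=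
      hHmeas measurableSet_Iio
    have hinv : ⇑f ⁻¹' {x | H x < ENNReal.ofReal ((1:ℝ)/2)}
        = {x | H x < ENNReal.ofReal ((1:ℝ)/2)} := by
      ext x
      simp only [Set.mem_preimage, Set.mem_setOf_eq, hHinv]
    rcases key _ hmeas hinv with h0 | h1
    · exact h0
    · exfalso
      apply hno_lt
      have hmem : ∀ᵐ x ∂σ, x ∈ {x | H x < ENNReal.ofReal ((1:ℝ)/2)} := by
        rw [← mem_ae_iff] at h1
        exact h1
      filter_upwards [hmem, hHu] with x hx hx2
      have : u x < ENNReal.ofReal ((1:ℝ)/2) := by rw [← hx2]; exact hx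
      rw [hu] at this
      exact (ENNReal.ofReal_lt_ofReal_iff_of_nonneg (hh0 x)).mp this
  -- conclude h = 1/2 a.e.
  have hhalf : h =ᵐ[σ] fun _ => (1:ℝ)/2 := by
    have h1 : ∀ᵐ x ∂σ, x ∉ {x | ENNReal.ofReal ((1:ℝ)/2) < H x} :=
      (measure_eq_zero_iff_ae_notMem).mp hB1
    have h2 : ∀ᵐ x ∂σ, x ∉ {x | H x < ENNReal.ofReal ((1:ℝ)/2)} :=
      (measure_eq_zero_iff_ae_notMem).mp hB2
    filter_upwards [h1, h2, hHu] with x hx1 hx2 hx3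
    simp only [Set.mem_setOf_eq, not_lt] at hx1 hx2
    have : H x = ENNReal.ofReal ((1:ℝ)/2) := le_antisymm hx1 hx2
    rw [hx3, hu] at this
    have := (ENNReal.ofReal_eq_ofReal_iff (hh0 x) (by norm_num)).mp this
    exact this
  -- finish: μ A = ν A for every measurable A
  refine Measure.ext fun A hA => ?_
  have hμA : (μ A).toReal = (1/2 : ℝ) * (σ A).toReal := by
    rw [← hE1 A hA, setIntegral_congr_ae hA (hhalf.mono fun x hx _ => hx),
      setIntegral_const, smul_eq_mul, mul_comm, measureReal_def]
  have hadd : (σ A).toReal = (μ A).toReal + (ν A).toReal := by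
    rw [hσ, Measure.add_apply, ENNReal.toReal_add (measure_ne_top μ A) (measure_ne_top ν A)]
  have hνA : (ν A).toReal = (μ A).toReal := by
    rw [hμA] at hadd ⊢
    linarith
  exact ((ENNReal.toReal_eq_toReal_iff' (measure_ne_top μ A) (measure_ne_top ν A)).mp hνA.symm)
end

section
/- Let V be a Banach space, S ⊆ V an open set whose closure S̄ is a star domain about 0 (i.e., 0 ∈ S̄ and [0,w] ⊆ S̄ for all w ∈ S̄). Let τ_n : S̄ → ℝ be continuous functions converging pointwise on S̄ to a continuous function τ. Assume each τ_n is Gateaux differentiable on a neighborhood of S̄ with bounded linear differentials d|_v τ_n, and assume there is a bounded linear functional L such that for every sequence v_n → 0 with v_n ∈ S̄, the functionals d|_{v_n} τ_n converge to L in operator norm. Then τ is Fréchet differentiable at 0 along S̄ with derivative L, i.e., |τ(v) − τ(0) − L(v)| = o(||v||) as v → 0 in S̄. -/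
open Filter Topology Asymptotics Metric Set

/-- differentiability of limits in Banach spaces: if continuous `τₙ → τ`
pointwise on the closure of an open set `S` (a star domain about `0`), each `τₙ` is
Gateaux differentiable on a neighborhood `U` of `closure S` with differentials `D n v`,
and `D n (vₙ) → L` in operator norm whenever `vₙ ∈ closure S`, `vₙ → 0`, then `τ` is
Fréchet differentiable at `0` along `closure S` with derivative `L`. -/
theorem statement12 (V : Type*) [NormedAddCommGroup V] [NormedSpace ℝ V] [CompleteSpace V]
    (S : Set V) (hSopen : IsOpen S) (h0 : (0 : V) ∈ closure S)
    (hstar : ∀ w ∈ closure S, segment ℝ 0 w ⊆ closure S)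
    (τn : ℕ → V → ℝ) (τ : V → ℝ)
    (hτncont : ∀ n, ContinuousOn (τn n) (closure S))
    (hτcont : ContinuousOn τ (closure S))
    (hpointwise : ∀ v ∈ closure S,
      Filter.Tendsto (fun n => τn n v) Filter.atTop (nhds (τ v)))
    (U : Set V) (hUopen : IsOpen U) (hUS : closure S ⊆ U)
    (D : ℕ → V → (V →L[ℝ] ℝ))
    (hGateaux : ∀ n, ∀ v ∈ U, ∀ h : V,
      Filter.Tendsto (fun t : ℝ => (τn n (v + t • h) - τn n v) / t)
        (nhdsWithin 0 {(0 : ℝ)}ᶜ) (nhds (D n v h)))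
    (L : V →L[ℝ] ℝ)
    (hL : ∀ v : ℕ → V, (∀ n, v n ∈ closure S) →
      Filter.Tendsto v Filter.atTop (nhds 0) →
      Filter.Tendsto (fun n => D n (v n)) Filter.atTop (nhds L)) :
    HasFDerivWithinAt τ L (closure S) 0 := by
  -- Key uniform statement: for every ε > 0 there are δ > 0 and N such that
  -- ‖D n v - L‖ ≤ ε whenever n ≥ N, v ∈ closure S, ‖v‖ ≤ δ.
  have key : ∀ ε > (0:ℝ), ∃ δ > (0:ℝ), ∃ N : ℕ, ∀ n ≥ N, ∀ v ∈ closure S,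
      ‖v‖ ≤ δ → ‖D n v - L‖ ≤ ε := by
    intro ε hε
    classical
    by_contra hcon
    push_neg at hcon
    have hfreq : ∀ k : ℕ, ∃ᶠ m in atTop,
        ∃ v, v ∈ closure S ∧ ‖v‖ ≤ 1 / (k + 1) ∧ ε < ‖D m v - L‖ := by
      intro k
      rw [Filter.frequently_atTop]
      intro N
      obtain ⟨n, hn, v, hv1, hv2, hv3⟩ := hcon (1 / (k + 1)) (by positivity) N
      exact ⟨n, hn, v, hv1, hv2, hv3⟩
    obtain ⟨φ, hφ, hP⟩ := Filter.extraction_forall_of_frequently hfreq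
    choose vv hvmem hvnorm hvbig using hP
    set w : ℕ → V := fun m => if h : ∃ k, φ k = m then vv h.choose else 0 with hw
    have hwφ : ∀ k, w (φ k) = vv k := by
      intro k
      have h : ∃ k', φ k' = φ k := ⟨k, rfl⟩
      simp only [hw, dif_pos h]
      congr 1
      exact hφ.injective h.choose_spec
    have hwmem : ∀ m, w m ∈ closure S := by
      intro m; by_cases h : ∃ k, φ k = m
      · simp only [hw, dif_pos h]; exact hvmem _
      · simp only [hw, dif_neg h]; exact h0
    have hwto : Tendsto w atTop (𝓝 0) := by
      rw [NormedAddCommGroup.tendsto_nhds_zero]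
      intro ρ hρ
      obtain ⟨K, hK⟩ := exists_nat_one_div_lt hρ
      filter_upwards [eventually_ge_atTop (φ K)] with m hm
      by_cases h : ∃ k, φ k = m
      · simp only [hw, dif_pos h]
        have hk : φ h.choose = m := h.choose_spec
        have hKk : K ≤ h.choose := by
          by_contra hlt
          push_neg at hlt
          have := hφ hlt
          omega
        calc ‖vv h.choose‖ ≤ 1 / (h.choose + 1) := hvnorm _
          _ ≤ 1 / (K + 1) := by
              apply div_le_div_of_nonneg_left one_pos.le (by positivity)
              exact_mod_cast by omega
          _ < ρ := hK
      · simp only [hw, dif_neg h, norm_zero]; exact hρ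
    have hconv : Tendsto (fun k => D (φ k) (w (φ k))) atTop (𝓝 L) :=
      (hL w hwmem hwto).comp hφ.tendsto_atTop
    obtain ⟨K, hK⟩ := Metric.tendsto_atTop.1 hconv ε hε
    have : ‖D (φ K) (w (φ K)) - L‖ < ε := by
      simpa [dist_eq_norm] using hK K le_rfl
    rw [hwφ] at this
    exact absurd this (not_lt.2 (hvbig K).le)
  -- Now the main estimate.
  apply HasFDerivAtFilter.of_isLittleO
  rw [Asymptotics.isLittleO_iff]
  intro c hc
  obtain ⟨δ, hδ, N, hN⟩ := key c hc
  have hball : ∀ᶠ v in 𝓝[closure S] (0:V), ‖v‖ < δ := by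
    apply eventually_nhdsWithin_of_eventually_nhds
    filter_upwards [Metric.ball_mem_nhds (0:V) hδ] with v hv
    simpa using hv
  rw [Filter.prod_pure, Filter.eventually_map]
  filter_upwards [hball, self_mem_nhdsWithin] with v hvδ hv
  simp only [sub_zero]
  have est : ∀ n ≥ N, ‖τn n v - τn n 0 - L v‖ ≤ c * ‖v‖ := by
    intro n hn
    have hseg : ∀ t ∈ Icc (0:ℝ) 1, t • v ∈ closure S := by
      intro t ht
      apply hstar v hv
      exact ⟨1 - t, t, by linarith [ht.2], ht.1, by ring, by simp⟩
    have hderiv : ∀ t ∈ Icc (0:ℝ) 1, HasDerivAt (fun s : ℝ => τn n (s • v) - s * L v)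
        (D n (t • v) v - L v) t := by
      intro t ht
      have h1 : HasDerivAt (fun s : ℝ => τn n (s • v)) (D n (t • v) v) t := by
        rw [hasDerivAt_iff_tendsto_slope]
        have hmap : Tendsto (fun u : ℝ => u - t) (𝓝[≠] t) (𝓝[≠] 0) := by
          apply tendsto_nhdsWithin_of_tendsto_nhds_of_eventually_within
          · have : Tendsto (fun u : ℝ => u - t) (𝓝 t) (𝓝 (t - t)) :=
              (continuous_id.sub continuous_const).tendsto t
            simpa using this.mono_left nhdsWithin_le_nhds
          · filter_upwards [self_mem_nhdsWithin] with u hu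
            simp only [Set.mem_compl_iff, Set.mem_singleton_iff, sub_eq_zero]
            exact hu
        have hG := (hGateaux n (t • v) (hUS (hseg t ht)) v).comp hmap
        apply Filter.Tendsto.congr _ hG
        intro u
        have heq : t • v + (u - t) • v = u • v := by
          rw [← add_smul]; ring_nf
        simp only [Function.comp_apply, heq, slope_def_field]
      have h2 : HasDerivAt (fun s : ℝ => s * L v) (L v) t := hasDerivAt_mul_const (L v)
      exact h1.sub h2
    have bound : ∀ t ∈ Icc (0:ℝ) 1, ‖D n (t • v) v - L v‖ ≤ c * ‖v‖ := by
      intro t ht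
      have hnorm : ‖t • v‖ ≤ δ := by
        rw [norm_smul]
        calc ‖t‖ * ‖v‖ ≤ 1 * ‖v‖ := by
              apply mul_le_mul_of_nonneg_right _ (norm_nonneg v)
              rw [Real.norm_eq_abs, abs_le]; exact ⟨by linarith [ht.1], ht.2⟩
          _ = ‖v‖ := one_mul _
          _ ≤ δ := hvδ.le
      have h1 : ‖D n (t • v) - L‖ ≤ c := hN n hn _ (hseg t ht) hnorm
      calc ‖D n (t • v) v - L v‖ = ‖(D n (t • v) - L) v‖ := by simp
        _ ≤ ‖D n (t • v) - L‖ * ‖v‖ := (D n (t • v) - L).le_opNorm v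
        _ ≤ c * ‖v‖ := mul_le_mul_of_nonneg_right h1 (norm_nonneg v)
    have hMVT := Convex.norm_image_sub_le_of_norm_hasDerivWithin_le
      (fun t ht => (hderiv t ht).hasDerivWithinAt) bound (convex_Icc 0 1)
      (left_mem_Icc.2 zero_le_one) (right_mem_Icc.2 zero_le_one)
    have heq : τn n ((1:ℝ) • v) - 1 * L v - (τn n ((0:ℝ) • v) - 0 * L v)
        = τn n v - τn n 0 - L v := by
      rw [one_smul, zero_smul]; ring
    calc ‖τn n v - τn n 0 - L v‖
        = ‖τn n ((1:ℝ) • v) - 1 * L v - (τn n ((0:ℝ) • v) - 0 * L v)‖ := by rw [heq]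
      _ ≤ c * ‖v‖ * ‖(1:ℝ) - 0‖ := hMVT
      _ = c * ‖v‖ := by simp
  have hT : Tendsto (fun n => τn n v - τn n 0 - L v) atTop (𝓝 (τ v - τ 0 - L v)) :=
    ((hpointwise v hv).sub (hpointwise 0 h0)).sub tendsto_const_nhds
  exact le_of_tendsto hT.norm (Filter.eventually_atTop.2 ⟨N, est⟩)
end
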